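/- arXiv:1606.07778 — 3 statements merged into one kernel-verified Lean document; each statement's English description precedes it below -/
import Mathlib

section
/- Let G be a Garside group, u, v ∈ G⁰ with r = sup(u) ≥ 1, and for 0 ≤ k ≤ r let ι_k (resp. φ_k) be the product of the leftmost (resp. rightmost) k factors of the right normal form of u. If inf(uv) = k, then ι_{r−k} ≼ uv·Δ^{−k}. -/
/-- A finite-type Garside structure on a group `G`. -/
structure GarsideStructure (G : Type*) [Group G] where
  /-- the submonoid of positive elements -/
  P : Submonoid G
  /-- the Garside element -/
  Δ : G
  delta_pos : Δ ∈ P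
  pos_antisymm : ∀ x : G, x ∈ P → x⁻¹ ∈ P → x = 1
  /-- gcd for the prefix order -/
  wedge : G → G → G
  /-- lcm for the prefix order -/
  vee : G → G → G
  wedge_le_left : ∀ x y, (wedge x y)⁻¹ * x ∈ P
  wedge_le_right : ∀ x y, (wedge x y)⁻¹ * y ∈ P
  le_wedge : ∀ x y z, z⁻¹ * x ∈ P → z⁻¹ * y ∈ P → z⁻¹ * wedge x y ∈ P
  left_le_vee : ∀ x y, x⁻¹ * vee x y ∈ P
  right_le_vee : ∀ x y, y⁻¹ * vee x y ∈ P
  vee_le : ∀ x y z, x⁻¹ * z ∈ P → y⁻¹ * z ∈ P → (vee x y)⁻¹ * z ∈ P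
  /-- gcd for the suffix order -/
  rwedge : G → G → G
  /-- lcm for the suffix order -/
  rvee : G → G → G
  rwedge_le_left : ∀ x y, x * (rwedge x y)⁻¹ ∈ P
  rwedge_le_right : ∀ x y, y * (rwedge x y)⁻¹ ∈ P
  le_rwedge : ∀ x y z, x * z⁻¹ ∈ P → y * z⁻¹ ∈ P → rwedge x y * z⁻¹ ∈ P
  left_le_rvee : ∀ x y, rvee x y * x⁻¹ ∈ P
  right_le_rvee : ∀ x y, rvee x y * y⁻¹ ∈ P
  rvee_le : ∀ x y z, z * x⁻¹ ∈ P → z * y⁻¹ ∈ P → z * (rvee x y)⁻¹ ∈ P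
  /-- the set of simple elements is finite -/
  simples_finite : {s : G | s ∈ P ∧ s⁻¹ * Δ ∈ P}.Finite
  /-- the simple elements generate the group -/
  simples_generate : Subgroup.closure {s : G | s ∈ P ∧ s⁻¹ * Δ ∈ P} = ⊤
  /-- conjugation by `Δ` preserves `P` -/
  conj_delta : ∀ x : G, x ∈ P ↔ Δ⁻¹ * x * Δ ∈ P
  /-- `P` is noetherian -/
  noetherian : ∀ x ∈ P, x ≠ 1 →
    ∃ N : ℕ, ∀ l : List G, (∀ a ∈ l, a ∈ P ∧ a ≠ 1) → l.prod = x → l.length ≤ N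

namespace GarsideStructure

variable {G : Type*} [Group G] (g : GarsideStructure G)

/-- the prefix order -/
def le (x y : G) : Prop := x⁻¹ * y ∈ g.P

/-- the suffix order: `rle x y` means `x ≽ y`, i.e. `y` is a suffix of `x` -/
def rle (x y : G) : Prop := x * y⁻¹ ∈ g.P

/-- `IsInf x k` : `k` is the infimum of `x`, `max {j : Δ^j ≼ x}` -/
def IsInf (x : G) (k : ℤ) : Prop := g.le (g.Δ ^ k) x ∧ ∀ j : ℤ, g.le (g.Δ ^ j) x → j ≤ k

/-- `IsSup x k` : `k` is the supremum of `x`, `min {j : x ≼ Δ^j}` -/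
def IsSup (x : G) (k : ℤ) : Prop := g.le x (g.Δ ^ k) ∧ ∀ j : ℤ, g.le x (g.Δ ^ j) → k ≤ j

/-- an element of a Garside group is absorbable -/
def Absorbable (y : G) : Prop :=
  (g.IsInf y 0 ∨ g.IsSup y 0) ∧
  ∃ (x : G) (i s : ℤ), g.IsInf x i ∧ g.IsSup x s ∧ g.IsInf (x * y) i ∧ g.IsSup (x * y) s

/-- simple elements: positive prefixes of `Δ` -/
def Simple (s : G) : Prop := s ∈ g.P ∧ g.le s g.Δ

/-- atoms: minimal nontrivial positive elements -/
def Atom (a : G) : Prop := a ∈ g.P ∧ a ≠ 1 ∧ ∀ u v : G, u ∈ g.P → v ∈ g.P → u * v = a → u = 1 ∨ v = 1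

/-- `(s,t)` is left-weighted: `∂s ∧ t = 1` -/
def LeftWeighted (s t : G) : Prop :=
  g.Simple s ∧ g.Simple t ∧ g.wedge (s⁻¹ * g.Δ) t = 1

/-- `(s,t)` is right-weighted: `s ∧^Lsh ∂⁻¹t = 1` -/
def RightWeighted (s t : G) : Prop :=
  g.Simple s ∧ g.Simple t ∧ g.rwedge s (g.Δ * t⁻¹) = 1

/-- `l` is the left normal form (of the element `l.prod`, which has infimum `0`) -/
def IsLNF (l : List G) : Prop :=
  (∀ s ∈ l, g.Simple s ∧ s ≠ 1) ∧ l.Chain' g.LeftWeighted ∧ ∀ h ∈ l.head?, h ≠ g.Δ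

/-- `l` is the right normal form, written in product order (`u = s'_r ⋯ s'_1` corresponds
to the list `[s'_r, …, s'_1]`); the last pair condition says `s'_1 ≠ Δ`. -/
def IsRNF (l : List G) : Prop :=
  (∀ s ∈ l, g.Simple s ∧ s ≠ 1) ∧ l.Chain' g.RightWeighted ∧ ∀ h ∈ l.getLast?, h ≠ g.Δ

/-- the vertex set of the additional length graph: left cosets `gΔ^ℤ` -/
abbrev ALVertex := G ⧸ Subgroup.zpowers g.Δ

/-- one coset can be reached from the other by multiplying the distinguished
representative by a nontrivial proper simple element or by an absorbable element -/
def ALStep (v w : G ⧸ Subgroup.zpowers g.Δ) : Prop :=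
  ∃ d : G, g.IsInf d 0 ∧ (d : G ⧸ Subgroup.zpowers g.Δ) = v ∧
    ((∃ s : G, g.Simple s ∧ s ≠ 1 ∧ s ≠ g.Δ ∧ ((d * s : G) : G ⧸ Subgroup.zpowers g.Δ) = w) ∨
     (∃ y : G, g.Absorbable y ∧ ((d * y : G) : G ⧸ Subgroup.zpowers g.Δ) = w))

/-- the additional length graph -/
def ALGraph : SimpleGraph (G ⧸ Subgroup.zpowers g.Δ) where
  Adj v w := v ≠ w ∧ (g.ALStep v w ∨ g.ALStep w v)
  symm := by refine ⟨?_⟩; intro v w h; exact ⟨Ne.symm h.1, h.2.symm⟩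
  loopless := by refine ⟨?_⟩; intro v h; exact h.1 rfl

end GarsideStructure


section GarsideAux

variable {G : Type*} [Group G] (g : GarsideStructure G)

lemma garside_conj_pos (x : G) (hx : x ∈ g.P) : g.Δ * x * g.Δ⁻¹ ∈ g.P := by
  apply (g.conj_delta (g.Δ * x * g.Δ⁻¹)).mpr
  have h : g.Δ⁻¹ * (g.Δ * x * g.Δ⁻¹) * g.Δ = x := by group
  rw [h]; exact hx

lemma garside_conj_zpow (m : ℤ) (x : G) (hx : x ∈ g.P) :
    g.Δ ^ m * x * g.Δ ^ (-m) ∈ g.P := by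
  induction m using Int.induction_on with
  | zero => simpa using hx
  | succ n ih =>
      have h : g.Δ ^ ((n : ℤ) + 1) * x * g.Δ ^ (-((n : ℤ) + 1)) =
          g.Δ * (g.Δ ^ (n : ℤ) * x * g.Δ ^ (-(n : ℤ))) * g.Δ⁻¹ := by group
      rw [h]; exact garside_conj_pos g _ ih
  | pred n ih =>
      have h : g.Δ ^ (-(n : ℤ) - 1) * x * g.Δ ^ (-(-(n : ℤ) - 1)) =
          g.Δ⁻¹ * (g.Δ ^ (-(n : ℤ)) * x * g.Δ ^ (-(-(n : ℤ)))) * g.Δ := by group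
      rw [h]
      exact (g.conj_delta _).mp ih

lemma garside_claimA (a b : G) (ha : a ∈ g.P) (hb : b ∈ g.P)
    (h : a * b * g.Δ⁻¹ ∈ g.P) : g.rwedge a g.Δ * b * g.Δ⁻¹ ∈ g.P := by
  set c := g.rvee b g.Δ with hc
  have h1 : a * b * c⁻¹ ∈ g.P := by
    apply g.rvee_le b g.Δ (a * b)
    · simpa using ha
    · exact h
  have h2 : g.Δ * b * c⁻¹ ∈ g.P := by
    apply g.rvee_le b g.Δ (g.Δ * b)
    · simpa using g.delta_pos
    · exact garside_conj_pos g b hb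
  have h3 : g.rwedge a g.Δ * (c * b⁻¹)⁻¹ ∈ g.P := by
    apply g.le_rwedge a g.Δ (c * b⁻¹)
    · have e : a * (c * b⁻¹)⁻¹ = a * b * c⁻¹ := by group
      rw [e]; exact h1
    · have e : g.Δ * (c * b⁻¹)⁻¹ = g.Δ * b * c⁻¹ := by group
      rw [e]; exact h2
  have h4 : c * g.Δ⁻¹ ∈ g.P := g.right_le_rvee b g.Δ
  have h5 : g.rwedge a g.Δ * b * g.Δ⁻¹ =
      (g.rwedge a g.Δ * (c * b⁻¹)⁻¹) * (c * g.Δ⁻¹) := by group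
  rw [h5]; exact g.P.mul_mem h3 h4

lemma garside_claimB (s₂ s₁ : G) (h : g.RightWeighted s₂ s₁) :
    g.rwedge (s₂ * s₁) g.Δ = s₁ := by
  obtain ⟨hs₂, hs₁, hw⟩ := h
  set t := g.rwedge (s₂ * s₁) g.Δ with ht
  have hΔs₁ : g.Δ * s₁⁻¹ ∈ g.P := by
    have h0 : s₁⁻¹ * g.Δ ∈ g.P := hs₁.2
    have e : g.Δ * s₁⁻¹ = g.Δ * (s₁⁻¹ * g.Δ) * g.Δ⁻¹ := by group
    rw [e]; exact garside_conj_pos g _ h0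
  have h1 : t * s₁⁻¹ ∈ g.P := by
    apply g.le_rwedge (s₂ * s₁) g.Δ s₁
    · simpa using hs₂.1
    · exact hΔs₁
  have h2 : s₂ * (t * s₁⁻¹)⁻¹ ∈ g.P := by
    have e : s₂ * (t * s₁⁻¹)⁻¹ = (s₂ * s₁) * t⁻¹ := by group
    rw [e]; exact g.rwedge_le_left _ _
  have h3 : (g.Δ * s₁⁻¹) * (t * s₁⁻¹)⁻¹ ∈ g.P := by
    have e : (g.Δ * s₁⁻¹) * (t * s₁⁻¹)⁻¹ = g.Δ * t⁻¹ := by group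
    rw [e]; exact g.rwedge_le_right _ _
  have h4 : (t * s₁⁻¹)⁻¹ ∈ g.P := by
    have h5 := g.le_rwedge s₂ (g.Δ * s₁⁻¹) (t * s₁⁻¹) h2 h3
    rwa [hw, one_mul] at h5
  have h5 : t * s₁⁻¹ = 1 := g.pos_antisymm _ h1 h4
  have h6 : t = s₁ := by
    have := mul_eq_one_iff_eq_inv.mp h5
    simpa using this
  exact h6

lemma garside_step2 (s₂ s₁ z : G) (h : g.RightWeighted s₂ s₁) (hz : z ∈ g.P)
    (hΔ : s₂ * s₁ * z * g.Δ⁻¹ ∈ g.P) : s₁ * z * g.Δ⁻¹ ∈ g.P := by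
  have key := garside_claimA g (s₂ * s₁) z (g.P.mul_mem h.1.1 h.2.1.1) hz hΔ
  rwa [garside_claimB g s₂ s₁ h] at key

lemma garside_claimC (m : List G) : ∀ (s z : G),
    List.Chain' g.RightWeighted (m ++ [s]) →
    (∀ x ∈ m, g.Simple x) → g.Simple s → z ∈ g.P →
    (m ++ [s]).prod * z * g.Δ⁻¹ ∈ g.P → s * z * g.Δ⁻¹ ∈ g.P := by
  induction m using List.reverseRecOn with
  | nil =>
      intro s z _ _ _ _ h
      simpa using h
  | append_singleton m' t ih =>
      intro s z hchain hs hss hz h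
      have hchain' : List.Chain' g.RightWeighted (m' ++ [t]) :=
        hchain.prefix ⟨[s], by simp⟩
      have hts : g.RightWeighted t s := by
        obtain ⟨-, -, hlast⟩ := List.isChain_append.mp hchain
        exact hlast t (by rw [List.getLast?_concat]; rfl) s rfl
      have hprod : ((m' ++ [t]) ++ [s]).prod * z * g.Δ⁻¹ =
          (m' ++ [t]).prod * (s * z) * g.Δ⁻¹ := by
        simp [List.prod_append, mul_assoc]
      have h' := ih t (s * z) hchain' (fun x hx => hs x (by simp [hx]))
          (hs t (by simp)) (g.P.mul_mem hss.1 hz) (by rw [hprod] at h; exact h)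
      exact garside_step2 g t s z hts hz (by rw [mul_assoc t s z]; exact h')

end GarsideAux

/-- Lemma "Lemma:Garside", second claim: if `u, v ∈ G⁰`, `r = sup(u) ≥ 1`, and `inf(uv) = k`,
then `ι_{r−k} ≼ uv·Δ^{−k}`, where `ι_j` is the product of the leftmost `j` factors of the
right normal form of `u`. -/
theorem garside_leftmost_factors_prefix {G : Type*} [Group G] (g : GarsideStructure G)
    (u v : G) (hu : g.IsInf u 0) (hv : g.IsInf v 0)
    (l : List G) (hl : g.IsRNF l) (hlu : l.prod = u)
    (r : ℕ) (hr : l.length = r) (hr1 : 1 ≤ r)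
    (hsupu : g.IsSup u r)
    (k : ℕ) (hk : g.IsInf (u * v) k) :
    g.le ((l.take (r - k)).prod) (u * v * g.Δ ^ (-(k : ℤ))) := by
  have hvP : v ∈ g.P := by simpa [GarsideStructure.le] using hv.1
  have ha : g.Δ ^ (-(k : ℤ)) * (u * v) ∈ g.P := by
    have h0 := hk.1
    rw [GarsideStructure.le, ← zpow_neg] at h0
    exact h0
  have hkr : k ≤ r := by
    have hc : u⁻¹ * g.Δ ^ (r : ℤ) ∈ g.P := hsupu.1
    have key : g.Δ ^ ((r : ℤ) - k) * v ∈ g.P := by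
      have e : g.Δ ^ ((r : ℤ) - k) * v =
          (g.Δ ^ ((r : ℤ) - k) * (u⁻¹ * g.Δ ^ (r : ℤ)) * g.Δ ^ (-((r : ℤ) - k))) *
            (g.Δ ^ (-(k : ℤ)) * (u * v)) := by
        group
      rw [e]
      exact g.P.mul_mem (garside_conj_zpow g _ _ hc) ha
    have h2 : (k : ℤ) - r ≤ 0 := by
      apply hv.2
      rw [GarsideStructure.le, ← zpow_neg, neg_sub]
      exact key
    omega
  have main : ∀ j : ℕ, j ≤ k →
      ((l.take (r - j)).prod)⁻¹ * (u * v * g.Δ ^ (-(j : ℤ))) ∈ g.P := by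
    intro j
    induction j with
    | zero =>
        intro _
        have htl : l.take (r - 0) = l := by
          rw [Nat.sub_zero, ← hr]
          exact List.take_length
        rw [htl, hlu]
        simpa using hvP
    | succ j ihj =>
        intro hjk
        have hj : j ≤ k := Nat.le_of_succ_le hjk
        have hz := ihj hj
        have hjr : j + 1 ≤ r := le_trans hjk hkr
        set i := r - (j + 1) with hi
        have hisucc : i + 1 = r - j := by omega
        have hilen : i < l.length := by omega
        set s := l.get ⟨i, hilen⟩ with hs
        have htake : l.take (i + 1) = l.take i ++ [s] := by
          rw [List.take_succ]
          congr 1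
          simp [List.getElem?_eq_getElem hilen, hs]
        -- chain and simples on take (i+1) l
        have hchain : List.Chain' g.RightWeighted (l.take i ++ [s]) := by
          rw [← htake]
          exact hl.2.1.prefix (List.take_prefix _ l)
        have hsimp : ∀ x ∈ l.take i, g.Simple x :=
          fun x hx => (hl.1 x (List.take_subset _ _ hx)).1
        have hssimp : g.Simple s := (hl.1 s (List.get_mem l ⟨i, hilen⟩)).1
        -- positivity of u*v*Δ^{-j}*Δ⁻¹
        have hb : g.Δ ^ (-((j : ℤ) + 1)) * (u * v) ∈ g.P := by
          have e1 : g.Δ ^ (-((j : ℤ) + 1)) * (u * v) =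
              g.Δ ^ ((k : ℤ) - (j : ℤ) - 1) * (g.Δ ^ (-(k : ℤ)) * (u * v)) := by
            have e0 : (-((j : ℤ) + 1)) = ((k : ℤ) - (j : ℤ) - 1) + (-(k : ℤ)) := by ring
            rw [e0, zpow_add, mul_assoc]
          have e2 : ((k - (j + 1) : ℕ) : ℤ) = (k : ℤ) - (j : ℤ) - 1 := by omega
          have hpow : g.Δ ^ ((k : ℤ) - (j : ℤ) - 1) ∈ g.P := by
            rw [← e2, zpow_natCast]
            exact pow_mem g.delta_pos _
          rw [e1]
          exact g.P.mul_mem hpow ha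
        have hpos : u * v * g.Δ ^ (-(j : ℤ)) * g.Δ⁻¹ ∈ g.P := by
          have e : u * v * g.Δ ^ (-(j : ℤ)) * g.Δ⁻¹ =
              g.Δ ^ ((j : ℤ) + 1) * (g.Δ ^ (-((j : ℤ) + 1)) * (u * v)) *
                g.Δ ^ (-((j : ℤ) + 1)) := by
            group
          rw [e]
          exact garside_conj_zpow g _ _ hb
        -- apply claim C
        have hC : s * (((l.take (r - j)).prod)⁻¹ * (u * v * g.Δ ^ (-(j : ℤ)))) * g.Δ⁻¹ ∈ g.P := by
          apply garside_claimC g (l.take i) s _ hchain hsimp hssimp hz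
          have eprod : (l.take i ++ [s]).prod = (l.take (r - j)).prod := by
            rw [← htake, hisucc]
          rw [eprod]
          have e : (l.take (r - j)).prod * (((l.take (r - j)).prod)⁻¹ *
              (u * v * g.Δ ^ (-(j : ℤ)))) * g.Δ⁻¹ =
              u * v * g.Δ ^ (-(j : ℤ)) * g.Δ⁻¹ := by
            group
          rw [e]
          exact hpos
        -- rewrite to the target form
        have hsplit : (l.take (r - j)).prod = (l.take i).prod * s := by
          rw [← hisucc, htake, List.prod_append, List.prod_singleton]
        have efin : s * (((l.take (r - j)).prod)⁻¹ * (u * v * g.Δ ^ (-(j : ℤ)))) * g.Δ⁻¹ =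
            ((l.take (r - (j + 1))).prod)⁻¹ * (u * v * g.Δ ^ (-((j + 1 : ℕ) : ℤ))) := by
          rw [hsplit, ← hi]
          push_cast
          group
        rwa [efin] at hC
  exact main k le_rfl
end

section
/- Let G be a group acting by isometries on a δ-hyperbolic space X with basepoint P, equipped with an automatic normal form whose normal form paths are unparameterized quasi-geodesics staying within distance M of geodesics between their endpoints. Suppose g ∈ G is rigid (its normal form is cyclically in normal form) and the normal form of g contains a subword representing an element h with d(P, h·P) > 5M. Then g acts loxodromically on X (in particular neither elliptically nor parabolically). -/
/-- Wiest's lemma: let `G` act by isometries on a `δ`-hyperbolic geodesic space `X` with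
basepoint `P`, equipped with an automatic normal form `nf` whose normal form paths stay
within distance `M` of geodesics between their endpoints.  If `g` is rigid (its normal
form is cyclically in normal form, i.e. the normal form of `g^n` is `n` copies of that of
`g`) and the normal form of `g` contains a subword representing an element `h` with
`d(P, h·P) > 5M`, then `g` acts loxodromically on `X`. -/
theorem rigid_with_big_subword_is_loxodromic
    {G : Type*} [Group G] {X : Type*} [MetricSpace X] [MulAction G X]
    (hiso : ∀ γ : G, Isometry (fun p : X => γ • p))
    -- δ-hyperbolicity (four-point condition)
    (δ : ℝ) (hδ : 0 ≤ δ)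
    (hhyp : ∀ x y z w : X,
      dist x y + dist z w ≤ max (dist x z + dist y w) (dist x w + dist y z) + 2 * δ)
    -- X is geodesic
    (hgeo : ∀ x y : X, ∃ c : ℝ → X, c 0 = x ∧ c (dist x y) = y ∧
      ∀ s ∈ Set.Icc (0 : ℝ) (dist x y), ∀ t ∈ Set.Icc (0 : ℝ) (dist x y),
        dist (c s) (c t) = |s - t|)
    -- basepoint and the automatic normal form
    (P : X) (nf : G → List G) (hnf : ∀ γ : G, (nf γ).prod = γ)
    -- geodesic words hypothesis: normal form paths stay within `M` of geodesics
    (Mc : ℝ) (hMc : 0 ≤ Mc)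
    (hM : ∀ (γ : G) (k : ℕ) (c : ℝ → X), c 0 = P → c (dist P (γ • P)) = γ • P →
      (∀ s ∈ Set.Icc (0 : ℝ) (dist P (γ • P)), ∀ t ∈ Set.Icc (0 : ℝ) (dist P (γ • P)),
        dist (c s) (c t) = |s - t|) →
      ∃ t ∈ Set.Icc (0 : ℝ) (dist P (γ • P)), dist (((nf γ).take k).prod • P) (c t) ≤ Mc)
    -- `g` is rigid
    (g : G) (hrigid : ∀ n : ℕ, nf (g ^ n) = (List.replicate n (nf g)).flatten)
    -- the normal form of `g` contains a subword moving the basepoint more than `5M`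
    (hsub : ∃ l₁ lh l₂ : List G, nf g = l₁ ++ lh ++ l₂ ∧ 5 * Mc < dist P (lh.prod • P)) :
    -- `g` acts loxodromically (its orbit is a quasi-isometric embedding of ℤ)
    ∃ A B : ℝ, 0 < A ∧ ∀ n : ℤ, A * |(n : ℝ)| - B ≤ dist P ((g ^ n) • P) := by

  classical
  obtain ⟨l₁, lh, l₂, hsplit, hbig⟩ := hsub
  have hdist_smul : ∀ (a : G) (x y : X), dist (a • x) (a • y) = dist x y := fun a x y =>
    (hiso a).dist_eq x y
  set f : ℕ → ℝ := fun n => dist P ((g ^ n) • P) with hf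
  -- product of a flattened replicate
  have hprodrep : ∀ m : ℕ, ((List.replicate m (nf g)).flatten).prod = g ^ m := by
    intro m
    induction m with
    | zero => simp
    | succ m ih =>
      rw [List.replicate_succ, List.flatten_cons, List.prod_append, ih, hnf]
      exact (pow_succ' g m).symm
  -- length of a flattened replicate
  have hlenrep : ∀ m : ℕ, ((List.replicate m (nf g)).flatten).length = m * (nf g).length := by
    intro m
    induction m with
    | zero => simp
    | succ m ih =>
      rw [List.replicate_succ, List.flatten_cons, List.length_append, ih]
      ring
  have htake : ∀ m k : ℕ, ((List.replicate (m + k) (nf g)).flatten).take (m * (nf g).length)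
      = (List.replicate m (nf g)).flatten := by
    intro m k
    rw [List.replicate_add, List.flatten_append, ← hlenrep m, List.take_left]
  -- near-superadditivity
  have hsuper : ∀ m k : ℕ, f m + f k ≤ f (m + k) + 2 * Mc := by
    intro m k
    obtain ⟨c, hc0, hcD, hcd⟩ := hgeo P ((g ^ (m + k)) • P)
    obtain ⟨t, ht, hdt⟩ := hM (g ^ (m + k)) (m * (nf g).length) c hc0 hcD hcd
    have hpre : (((nf (g ^ (m + k))).take (m * (nf g).length)).prod) = g ^ m := by
      rw [hrigid, htake, hprodrep]
    rw [hpre] at hdt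
    set D := dist P ((g ^ (m + k)) • P) with hD
    have h0mem : (0 : ℝ) ∈ Set.Icc (0 : ℝ) D := ⟨le_refl _, dist_nonneg⟩
    have hDmem : D ∈ Set.Icc (0 : ℝ) D := ⟨dist_nonneg, le_refl _⟩
    have h0t : dist P (c t) = t := by
      rw [← hc0, hcd 0 h0mem t ht]
      rw [abs_of_nonpos (by linarith [ht.1])]
      ring
    have htD : dist (c t) (c D) = D - t := by
      rw [hcd t ht D hDmem, abs_of_nonpos (by linarith [ht.2])]
      ring
    have h1 : f m ≤ t + Mc := by
      calc f m = dist P ((g ^ m) • P) := rfl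
        _ ≤ dist P (c t) + dist (c t) ((g ^ m) • P) := dist_triangle _ _ _
        _ ≤ t + Mc := by rw [h0t, dist_comm]; linarith [hdt]
    have h2 : f k ≤ (D - t) + Mc := by
      have hk : (g ^ m) • ((g ^ k) • P) = (g ^ (m + k)) • P := by
        rw [← mul_smul, ← pow_add]
      calc f k = dist ((g ^ m) • P) ((g ^ m) • ((g ^ k) • P)) := (hdist_smul _ _ _).symm
        _ = dist ((g ^ m) • P) ((g ^ (m + k)) • P) := by rw [hk]
        _ ≤ dist ((g ^ m) • P) (c t) + dist (c t) ((g ^ (m + k)) • P) := dist_triangle _ _ _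
        _ ≤ Mc + dist (c t) (c D) := by rw [hcD]; linarith [hdt]
        _ = (D - t) + Mc := by rw [htD]; ring
    have : f (m + k) = D := rfl
    linarith
  -- the subword forces f 1 > 3 Mc
  have hbase : 3 * Mc < f 1 := by
    obtain ⟨c, hc0, hcD, hcd⟩ := hgeo P (g • P)
    obtain ⟨t₁, ht₁, hdt₁⟩ := hM g l₁.length c hc0 hcD hcd
    obtain ⟨t₂, ht₂, hdt₂⟩ := hM g (l₁.length + lh.length) c hc0 hcD hcd
    have hp₁ : ((nf g).take l₁.length).prod = l₁.prod := by
      rw [hsplit, List.append_assoc, List.take_left]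
    have hp₂ : ((nf g).take (l₁.length + lh.length)).prod = (l₁ ++ lh).prod := by
      rw [hsplit, ← List.length_append, List.take_left]
    rw [hp₁] at hdt₁
    rw [hp₂] at hdt₂
    set D := dist P (g • P) with hD
    have hkey : dist P (lh.prod • P) = dist (l₁.prod • P) ((l₁ ++ lh).prod • P) := by
      rw [List.prod_append, mul_smul, hdist_smul]
    have htt : dist (c t₁) (c t₂) ≤ D := by
      rw [hcd t₁ ht₁ t₂ ht₂]
      rw [abs_le]
      constructor <;> linarith [ht₁.1, ht₁.2, ht₂.1, ht₂.2]
    have h5 : dist P (lh.prod • P) ≤ 2 * Mc + D := by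
      calc dist P (lh.prod • P) = dist (l₁.prod • P) ((l₁ ++ lh).prod • P) := hkey
        _ ≤ dist (l₁.prod • P) (c t₁) + dist (c t₁) (c t₂)
              + dist (c t₂) ((l₁ ++ lh).prod • P) := dist_triangle4 _ _ _ _
        _ ≤ Mc + D + Mc := by
            have := dist_comm (c t₂) ((l₁ ++ lh).prod • P)
            linarith [hdt₁, hdt₂, htt, this.le, this.ge]
        _ = 2 * Mc + D := by ring
    have hf1 : f 1 = D := by simp [hf, pow_one, hD]
    linarith
  set ε : ℝ := f 1 - 2 * Mc with hε
  have hεpos : 0 < ε := by simp only [hε]; linarith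
  -- linear growth along ℕ
  have hgrow : ∀ n : ℕ, (n : ℝ) * ε ≤ f n := by
    intro n
    induction n with
    | zero =>
      have : f 0 = 0 := by simp [hf]
      simp [this]
    | succ n ih =>
      have h := hsuper n 1
      push_cast
      have : f n + f 1 ≤ f (n + 1) + 2 * Mc := h
      nlinarith
  have hinv : ∀ a : G, dist P (a⁻¹ • P) = dist P (a • P) := by
    intro a
    calc dist P (a⁻¹ • P) = dist (a • P) (a • (a⁻¹ • P)) := (hdist_smul a _ _).symm
      _ = dist (a • P) P := by rw [smul_inv_smul]
      _ = dist P (a • P) := dist_comm _ _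
  refine ⟨ε, 0, hεpos, ?_⟩
  intro n
  rw [sub_zero]
  cases n with
  | ofNat m =>
    have h1 : (g : G) ^ (Int.ofNat m : ℤ) = g ^ m := by
      rw [Int.ofNat_eq_natCast, zpow_natCast]
    have h2 : |((Int.ofNat m : ℤ) : ℝ)| = (m : ℝ) := by
      rw [Int.ofNat_eq_natCast]
      push_cast
      exact abs_of_nonneg (Nat.cast_nonneg m)
    rw [h1, h2, mul_comm]
    exact hgrow m
  | negSucc m =>
    have h1 : (g : G) ^ (Int.negSucc m : ℤ) = (g ^ (m + 1))⁻¹ := zpow_negSucc g m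
    have h2 : |((Int.negSucc m : ℤ) : ℝ)| = ((m : ℝ) + 1) := by
      rw [Int.cast_negSucc]
      push_cast
      have hn : (0:ℝ) ≤ (m:ℝ) + 1 := by positivity
      rw [show -((m:ℝ)+1) = -((m:ℝ)+1) from rfl, abs_of_nonpos (by linarith)]
      ring
    rw [h1, hinv, h2, mul_comm]
    have := hgrow (m + 1)
    push_cast at this ⊢
    linarith
end

section
/- Let G be an irreducible Artin–Tits group of spherical type. Then G/Z(G) is not virtually cyclic. (Together with the existence of a WPD loxodromic element for the action on the hyperbolic graph 𝒞_AL(G), this yields that G/Z(G) is acylindrically hyperbolic.) -/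
section Artin

/-- the alternating word `iji⋯` of length `m` in the free group -/
def braidWord {B : Type*} (i j : B) : ℕ → FreeGroup B
  | 0 => 1
  | n + 1 => FreeGroup.of i * braidWord j i n

/-- the braid relations associated to a Coxeter matrix -/
def artinRelationsSet {B : Type*} (M : CoxeterMatrix B) : Set (FreeGroup B) :=
  {r | ∃ i j : B, i ≠ j ∧ r = braidWord i j (M i j) * (braidWord j i (M i j))⁻¹}

/-- the Artin–Tits group associated to a Coxeter matrix -/
abbrev ArtinGroup {B : Type*} (M : CoxeterMatrix B) : Type _ :=
  PresentedGroup (artinRelationsSet M)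

/-- the Coxeter diagram: vertices are the generators, edges join `i ≠ j` with `m_{ij} ≥ 3`
(where `0` encodes `∞`) -/
def coxeterDiagram {B : Type*} (M : CoxeterMatrix B) : SimpleGraph B where
  Adj i j := i ≠ j ∧ M i j ≠ 2
  symm := by refine ⟨?_⟩; intro i j h; exact ⟨h.1.symm, by rw [M.symmetric]; exact h.2⟩
  loopless := by refine ⟨?_⟩; intro i h; exact h.1 rfl

/-- an Artin–Tits group is irreducible if its Coxeter diagram is connected -/
def CoxeterMatrix.IsIrreducible {B : Type*} (M : CoxeterMatrix B) : Prop :=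
  (coxeterDiagram M).Connected

/-- an Artin–Tits group is of spherical type if the associated Coxeter group is finite -/
def CoxeterMatrix.IsSpherical {B : Type*} (M : CoxeterMatrix B) : Prop :=
  Finite M.Group

/-- the Coxeter diagram has at least one edge (this excludes free abelian groups) -/
def CoxeterMatrix.HasEdge {B : Type*} (M : CoxeterMatrix B) : Prop :=
  ∃ i j : B, i ≠ j ∧ 3 ≤ M i j

/-- `gs` is the classical Garside structure on the Artin–Tits group of `M`: the positive
monoid is generated by the standard generators, and `Δ` is their least common multiple
with respect to the prefix order. -/
structure IsClassicalGarside {B : Type*} (M : CoxeterMatrix B)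
    (gs : GarsideStructure (ArtinGroup M)) : Prop where
  pos_eq : gs.P = Submonoid.closure (Set.range fun i => (PresentedGroup.of i : ArtinGroup M))
  le_delta : ∀ i : B, gs.le (PresentedGroup.of i) gs.Δ
  delta_min : ∀ d : ArtinGroup M, d ∈ gs.P →
    (∀ i : B, gs.le (PresentedGroup.of i) d) → gs.le gs.Δ d

/-- the special element `x_G` of Proposition (Lox), together with its normal form data -/
structure GarsideStructure.SpecialElement {G : Type*} [Group G] (g : GarsideStructure G) where
  /-- the element itself -/
  x : G
  /-- the atom appearing as first and last normal form factor -/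
  a : G
  /-- the atom whose complements appear as consecutive factors -/
  b : G
  /-- the common left and right normal form of `x` -/
  l : List G
  inf_zero : g.IsInf x 0
  atom_a : g.Atom a
  atom_b : g.Atom b
  lnf : g.IsLNF l
  rnf : g.IsRNF l
  prod_eq : l.prod = x
  nonempty : l ≠ []
  head_a : l.head? = some a
  last_a : l.getLast? = some a
  /-- the first and last factors are the only ones consisting of a single atom -/
  interior_not_atom : ∀ s ∈ (l.drop 1).dropLast, ¬ g.Atom s
  /-- rigidity: the pair `(φ(x), ι(x)) = (a, a)` is left-weighted -/
  rigid : g.LeftWeighted a a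
  /-- two consecutive factors are `b⁻¹Δ` and `τ(b⁻¹)Δ` -/
  consecutive : ∃ l₁ l₂ : List G,
    l = l₁ ++ [b⁻¹ * g.Δ, (g.Δ⁻¹ * b⁻¹ * g.Δ) * g.Δ] ++ l₂
  /-- `sup(x)` is a multiple of `o(G)`, i.e. `Δ^{sup x}` is central -/
  delta_pow_central : g.Δ ^ (l.length : ℤ) ∈ Subgroup.center G

/-- `lam` is the projection `λ(v) = −max{k : x ⋠ ` distinguished rep of `x^k·v}` of the
vertex `v` to the axis of `x`. -/
def GarsideStructure.IsAxisProj {G : Type*} [Group G] (g : GarsideStructure G) (x : G)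
    (v : G ⧸ Subgroup.zpowers g.Δ) (lam : ℤ) : Prop :=
  (∃ d : G, g.IsInf d 0 ∧ (d : G ⧸ Subgroup.zpowers g.Δ) = x ^ (-lam) • v ∧ ¬ g.le x d) ∧
  ∀ k : ℤ, (∃ d : G, g.IsInf d 0 ∧ (d : G ⧸ Subgroup.zpowers g.Δ) = x ^ k • v ∧ ¬ g.le x d) →
    k ≤ -lam

/-- the vertices of the preferred path starting at the vertex of `d`, with edge labels `L` -/
def GarsideStructure.pathVerts {G : Type*} [Group G] (g : GarsideStructure G) (d : G)
    (L : List G) : List (G ⧸ Subgroup.zpowers g.Δ) :=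
  (List.range (L.length + 1)).map fun i => ((d * (L.take i).prod : G) : G ⧸ Subgroup.zpowers g.Δ)

end Artin


noncomputable section

open Complex

namespace CWDyn

variable (θ c : ℝ)

def refl1 (p : ℝ × ℝ) : ℝ × ℝ := (-p.1 - 2*c*p.2, p.2)
def refl2 (p : ℝ × ℝ) : ℝ × ℝ := (p.1, -2*c*p.1 - p.2)

def E : ℂ := (Real.cos θ : ℂ) + (Real.sin θ : ℂ) * I

def q (p : ℝ × ℝ) : ℂ := I * ((p.1 : ℂ) - (p.2 : ℂ) * E θ)

lemma q_refl1 (hc : c = - Real.cos θ) (p : ℝ × ℝ) :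
    q θ (refl1 c p) = (starRingEnd ℂ) (q θ p) := by
  obtain ⟨x, y⟩ := p
  simp only [q, refl1, E, map_mul, Complex.conj_I, map_sub, map_add, Complex.conj_ofReal, hc]
  push_cast [-Complex.ofReal_cos, -Complex.ofReal_sin]
  generalize (Real.cos θ : ℂ) = co
  generalize (Real.sin θ : ℂ) = si
  ring

lemma q_refl2 (hc : c = - Real.cos θ) (p : ℝ × ℝ) :
    q θ (refl2 c p) = (E θ)^2 * (starRingEnd ℂ) (q θ p) := by
  obtain ⟨x, y⟩ := p
  have hpyth : (Real.sin θ : ℂ)^2 + (Real.cos θ : ℂ)^2 = 1 :=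
    mod_cast congrArg (Complex.ofReal) (Real.sin_sq_add_cos_sq θ)
  simp only [q, refl2, E, map_mul, Complex.conj_I, map_sub, map_add, Complex.conj_ofReal, hc]
  push_cast [-Complex.ofReal_cos, -Complex.ofReal_sin]
  revert hpyth
  generalize (Real.cos θ : ℂ) = co
  generalize (Real.sin θ : ℂ) = si
  intro hpyth
  have hI : (I:ℂ)^2 = -1 := Complex.I_sq
  linear_combination (-(I*((x:ℂ)+co*(y:ℂ))+I^2*(y:ℂ)*si)) * hpyth + ((I*((x:ℂ)+co*(y:ℂ))+I^2*(y:ℂ)*si)*si^2) * hI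



lemma conjE_eq : (starRingEnd ℂ) (E θ) = Complex.exp ((-θ : ℝ) * I) := by
  rw [Complex.exp_mul_I]
  simp only [E, map_add, map_mul, Complex.conj_I, Complex.conj_ofReal, Complex.ofReal_neg,
    Complex.cos_neg, Complex.sin_neg, ← Complex.ofReal_cos, ← Complex.ofReal_sin]
  ring

lemma q_eq (p : ℝ × ℝ) :
    q θ p = ((p.2 * Real.sin θ : ℝ) : ℂ) + ((p.1 - p.2 * Real.cos θ : ℝ) : ℂ) * I := by
  simp only [q, E]
  push_cast
  ring_nf
  rw [Complex.I_sq]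
  ring

lemma q_step (hc : c = - Real.cos θ) (p : ℝ × ℝ) :
    q θ (refl1 c (refl2 c p)) = ((starRingEnd ℂ) (E θ))^2 * q θ p := by
  rw [q_refl1 θ c hc, q_refl2 θ c hc, map_mul, map_pow, Complex.conj_conj]

lemma q_iter (hc : c = - Real.cos θ) (n : ℕ) (p : ℝ × ℝ) :
    q θ ((fun p => refl1 c (refl2 c p))^[n] p)
      = ((starRingEnd ℂ) (E θ))^(2*n) * q θ p := by
  induction n with
  | zero => simp
  | succ k ih =>
      rw [Function.iterate_succ_apply', q_step θ c hc, ih]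
      ring

lemma q_inj (hsin : Real.sin θ ≠ 0) : Function.Injective (q θ) := by
  rintro ⟨x, y⟩ ⟨x', y'⟩ h
  rw [q_eq, q_eq] at h
  have h1 : y * Real.sin θ = y' * Real.sin θ := by
    have := congrArg Complex.re h
    simpa [Complex.sin_ofReal_re] using this
  have h2 : x - y * Real.cos θ = x' - y' * Real.cos θ := by
    have := congrArg Complex.im h
    simpa [Complex.cos_ofReal_re] using this
  have hy : y = y' := mul_right_cancel₀ hsin h1
  subst hy
  have hx : x = x' := by linarith
  simp [hx]

lemma conjE_pow_eq_neg_one (m : ℕ) (hm : 2 ≤ m) (hθ : θ = Real.pi / m) :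
    ((starRingEnd ℂ) (E θ))^m = -1 := by
  rw [conjE_eq, ← Complex.exp_nat_mul]
  have hm0 : (m : ℂ) ≠ 0 := Nat.cast_ne_zero.mpr (by omega)
  have h : (m : ℂ) * (((-θ : ℝ) : ℂ) * I) = -((Real.pi : ℂ) * I) := by
    rw [hθ]
    push_cast
    field_simp
  rw [h, Complex.exp_neg, Complex.exp_pi_mul_I]
  norm_num


lemma sin_theta_pos (m : ℕ) (hm : 2 ≤ m) : 0 < Real.sin (Real.pi / m) := by
  apply Real.sin_pos_of_pos_of_lt_pi
  · positivity
  · have h1 : (1:ℝ) < m := by exact_mod_cast (by omega : 1 < m)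
    calc Real.pi / m < Real.pi / 1 := by
          apply div_lt_div_of_pos_left Real.pi_pos (by linarith) h1
      _ = Real.pi := by ring

lemma iterate_eq_self (m : ℕ) (hm : 2 ≤ m) (p : ℝ × ℝ) :
    (fun p => refl1 (-Real.cos (Real.pi / m)) (refl2 (-Real.cos (Real.pi / m)) p))^[m] p = p := by
  set θ := Real.pi / m with hθ
  set c := -Real.cos θ with hc
  apply q_inj θ (ne_of_gt (sin_theta_pos m hm))
  rw [q_iter θ c rfl m p]
  have h1 : ((starRingEnd ℂ) (E θ))^(2*m) = 1 := by
    rw [mul_comm, pow_mul, conjE_pow_eq_neg_one θ m hm hθ]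
    norm_num
  rw [h1, one_mul]

lemma iterate_two_ne (m : ℕ) (hm : 3 ≤ m) :
    (fun p => refl1 (-Real.cos (Real.pi / m)) (refl2 (-Real.cos (Real.pi / m)) p))^[2] ((1:ℝ), (0:ℝ))
      ≠ ((1:ℝ), (0:ℝ)) := by
  set θ := Real.pi / m with hθ
  set c := -Real.cos θ with hc
  intro hfix
  have h := q_iter θ c rfl 2 ((1:ℝ), (0:ℝ))
  rw [hfix] at h
  have hq1 : q θ ((1:ℝ), (0:ℝ)) = I := by simp [q]
  rw [hq1] at h
  have h4 : ((starRingEnd ℂ) (E θ))^(4:ℕ) = 1 := by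
    have := h.symm
    rw [show 2*2 = 4 from rfl] at this
    field_simp at this
    tauto
  rw [conjE_eq, ← Complex.exp_nat_mul, Complex.exp_eq_one_iff] at h4
  obtain ⟨n, hn⟩ := h4
  have hn' : ((4 * (-θ) : ℝ) : ℂ) * I = ((n * (2 * Real.pi) : ℝ) : ℂ) * I := by
    push_cast
    push_cast at hn
    linear_combination hn
  have hnr : 4 * (-θ) = n * (2 * Real.pi) := by
    have := mul_right_cancel₀ Complex.I_ne_zero hn'
    exact_mod_cast this
  have hθpos : 0 < θ := by positivity
  have hθlt : 4 * θ < 2 * Real.pi := by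
    have h3 : (3:ℝ) ≤ m := by exact_mod_cast hm
    have : θ ≤ Real.pi / 3 := by
      apply div_le_div_of_nonneg_left Real.pi_pos.le (by norm_num) h3
    nlinarith [Real.pi_pos]
  have hneg : (0:ℝ) < -n := by
    by_contra hcon
    push_neg at hcon
    have : (0:ℝ) ≤ (n : ℝ) := by linarith
    nlinarith [Real.pi_pos]
  have hlt1 : (-n : ℝ) < 1 := by nlinarith [Real.pi_pos]
  have h1 : (0:ℤ) < -n := by exact_mod_cast hneg
  have h2 : (-n:ℤ) < 1 := by exact_mod_cast hlt1
  omega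

end CWDyn

noncomputable section

namespace CWGeom

open Finsupp

variable {B : Type*} (M : CoxeterMatrix B)

/-- cosine coefficients of the geometric representation -/
def gc (k l : B) : ℝ := - Real.cos (Real.pi / M k l)

lemma gc_diag (k : B) : gc M k k = 1 := by
  simp [gc, M.diagonal k]

lemma gc_symm (k l : B) : gc M k l = gc M l k := by
  rw [gc, gc, M.symmetric]

lemma gc_abs_lt (k l : B) (h : 2 ≤ M k l) : |gc M k l| < 1 := by
  rw [gc, abs_neg, abs_lt]
  have h1 := CWDyn.sin_theta_pos (M k l) h
  have h2 := Real.sin_sq_add_cos_sq (Real.pi / M k l)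
  constructor <;> nlinarith

/-- the symmetric bilinear pairing against `e_k` -/
def gip (k : B) : (B →₀ ℝ) →ₗ[ℝ] ℝ := Finsupp.linearCombination ℝ (fun l => gc M k l)

lemma gip_single (k l : B) (x : ℝ) : gip M k (Finsupp.single l x) = x * gc M k l := by
  unfold gip
  rw [Finsupp.linearCombination_single, smul_eq_mul]

lemma gip_smul_single (k l : B) (x : ℝ) :
    gip M k (x • Finsupp.single l (1:ℝ)) = x * gc M k l := by
  rw [map_smul, gip_single, smul_eq_mul]
  ring

/-- the reflection attached to the generator `k` -/
def grefl (k : B) (v : B →₀ ℝ) : B →₀ ℝ := v - (2 * gip M k v) • Finsupp.single k 1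

lemma gip_grefl (k : B) (v : B →₀ ℝ) : gip M k (grefl M k v) = - gip M k v := by
  unfold grefl
  rw [map_sub, map_smul, gip_single, gc_diag, smul_eq_mul]
  ring

lemma grefl_involutive (k : B) : Function.Involutive (grefl M k) := by
  intro v
  have h := gip_grefl M k v
  rw [grefl, h, grefl]
  have h2 : (2:ℝ) * -((gip M k) v) = -(2 * (gip M k) v) := by ring
  rw [h2, neg_smul, sub_neg_eq_add, sub_add_cancel]


/-- the reflection as a permutation -/
def gperm (k : B) : Equiv.Perm (B →₀ ℝ) := (grefl_involutive M k).toPerm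

lemma gperm_apply (k : B) (v : B →₀ ℝ) : gperm M k v = grefl M k v := rfl

/-- plane embedding -/
def pl (k l : B) (p : ℝ × ℝ) (u : B →₀ ℝ) : B →₀ ℝ :=
  p.1 • Finsupp.single k 1 + p.2 • Finsupp.single l 1 + u

lemma gip_pl (k l k' : B) (p : ℝ × ℝ) (u : B →₀ ℝ) :
    gip M k' (pl k l p u) = p.1 * gc M k' k + p.2 * gc M k' l + gip M k' u := by
  unfold pl
  rw [map_add, map_add, gip_smul_single, gip_smul_single]

lemma grefl_pl_left (k l : B) (p : ℝ × ℝ) (u : B →₀ ℝ) (hu : gip M k u = 0) :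
    grefl M k (pl k l p u) = pl k l (CWDyn.refl1 (gc M k l) p) u := by
  rw [grefl, gip_pl, hu, gc_diag, CWDyn.refl1, pl, pl]
  simp only
  module

lemma grefl_pl_right (k l : B) (p : ℝ × ℝ) (u : B →₀ ℝ) (hu : gip M l u = 0) :
    grefl M l (pl k l p u) = pl k l (CWDyn.refl2 (gc M k l) p) u := by
  rw [grefl, gip_pl, hu, gc_diag, gc_symm M l k, CWDyn.refl2, pl, pl]
  simp only
  module

lemma gperm_pair_iter (k l : B) (u : B →₀ ℝ) (hk : gip M k u = 0) (hl : gip M l u = 0)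
    (n : ℕ) (p : ℝ × ℝ) :
    ((gperm M k * gperm M l)^n) (pl k l p u)
      = pl k l ((fun p => CWDyn.refl1 (gc M k l) (CWDyn.refl2 (gc M k l) p))^[n] p) u := by
  induction n generalizing p with
  | zero => simp
  | succ d ih =>
      rw [pow_succ, Equiv.Perm.mul_apply, Equiv.Perm.mul_apply, gperm_apply, gperm_apply,
        grefl_pl_right M k l p u hl, grefl_pl_left M k l _ u hk, ih,
        Function.iterate_succ_apply]

/-- decomposition of an arbitrary vector -/
lemma decompose (k l : B) (h2 : 2 ≤ M k l) (v : B →₀ ℝ) :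
    ∃ (p : ℝ × ℝ) (u : B →₀ ℝ), gip M k u = 0 ∧ gip M l u = 0 ∧ v = pl k l p u := by
  set c := gc M k l with hc
  have habs := gc_abs_lt M k l h2
  have hD : 1 - c^2 > 0 := by
    rw [abs_lt] at habs
    nlinarith
  have hD' : 1 - c^2 ≠ 0 := ne_of_gt hD
  refine ⟨(((gip M k v) - c*(gip M l v))/(1-c^2), ((gip M l v) - c*(gip M k v))/(1-c^2)),
    v - (((gip M k v) - c*(gip M l v))/(1-c^2)) • Finsupp.single k 1
      - (((gip M l v) - c*(gip M k v))/(1-c^2)) • Finsupp.single l 1, ?_, ?_, ?_⟩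
  · rw [map_sub, map_sub, gip_smul_single, gip_smul_single, gc_diag, ← hc]
    field_simp
    ring
  · rw [map_sub, map_sub, gip_smul_single, gip_smul_single, gc_diag, gc_symm M l k, ← hc]
    field_simp
    ring
  · unfold pl
    simp only
    abel

lemma pl_inj (i j : B) (hij : i ≠ j) (p p' : ℝ × ℝ) (u : B →₀ ℝ)
    (h : pl i j p u = pl i j p' u) : p = p' := by
  have e1 := congrArg (fun f : B →₀ ℝ => f i) h
  have e2 := congrArg (fun f : B →₀ ℝ => f j) h
  simp only [pl, Finsupp.add_apply, Finsupp.smul_apply, smul_eq_mul, Finsupp.single_eq_same,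
    Finsupp.single_eq_of_ne (Ne.symm hij), Finsupp.single_eq_of_ne hij] at e1 e2
  exact Prod.ext (by linarith) (by linarith)

lemma gperm_braid (k l : B) (hkl : k ≠ l) :
    ((gperm M k) * (gperm M l))^(M k l) = 1 := by
  rcases Nat.eq_zero_or_pos (M k l) with h0 | hpos
  · rw [h0, pow_zero]
  · have h2 : 2 ≤ M k l := by
      have := M.off_diagonal k l hkl
      omega
    apply Equiv.ext
    intro v
    obtain ⟨p, u, hk, hl, rfl⟩ := decompose M k l h2 v
    rw [gperm_pair_iter M k l u hk hl]
    rw [show gc M k l = -Real.cos (Real.pi / M k l) from rfl]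
    rw [CWDyn.iterate_eq_self (M k l) h2 p]
    rfl

lemma gperm_liftable : M.IsLiftable (fun k => gperm M k) := by
  intro k l
  by_cases hkl : k = l
  · subst hkl
    rw [M.diagonal, pow_one]
    apply Equiv.ext
    intro v
    rw [Equiv.Perm.mul_apply, gperm_apply, gperm_apply, grefl_involutive M k v]
    rfl
  · exact gperm_braid M k l hkl

/-- the key hard fact: `(s i * s j)^2 ≠ 1` in the Coxeter group when `M i j ≥ 3` -/
theorem simple_pair_sq_ne_one (i j : B) (hm : 3 ≤ M i j) :
    (M.simple i * M.simple j)^2 ≠ 1 := by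
  have hij : i ≠ j := by
    intro h
    rw [h, M.diagonal] at hm
    omega
  intro hsq
  set cs := M.toCoxeterSystem
  let ρ : M.Group →* Equiv.Perm (B →₀ ℝ) := cs.lift ⟨fun k => gperm M k, gperm_liftable M⟩
  have hρ : ∀ k, ρ (M.simple k) = gperm M k := fun k =>
    cs.lift_apply_simple (gperm_liftable M) k
  have h1 : ((gperm M i) * (gperm M j))^2 = 1 := by
    rw [← hρ i, ← hρ j, ← map_mul, ← map_pow, hsq, map_one]
  have h2 := congrArg (fun (σ : Equiv.Perm (B →₀ ℝ)) => σ (Finsupp.single i 1)) h1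
  simp only [Equiv.Perm.one_apply] at h2
  have hpl : Finsupp.single i (1:ℝ) = pl i j ((1:ℝ), (0:ℝ)) 0 := by
    unfold pl
    simp
  rw [hpl, gperm_pair_iter M i j 0 (map_zero (gip M i)) (map_zero (gip M j)) 2 ((1:ℝ),(0:ℝ))] at h2
  have hne := CWDyn.iterate_two_ne (M i j) hm
  rw [show gc M i j = -Real.cos (Real.pi / M i j) from rfl] at h2
  apply hne
  exact pl_inj i j hij _ _ 0 h2

end CWGeom

end

noncomputable section

namespace CWArtin

/-- group-valued braid word -/
def bwp {T : Type*} [Monoid T] (x y : T) : ℕ → T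
  | 0 => 1
  | n + 1 => x * bwp y x n

lemma lift_braidWord {B T : Type*} [Group T] (f : B → T) :
    ∀ (n : ℕ) (i j : B), FreeGroup.lift f (braidWord i j n) = bwp (f i) (f j) n := by
  intro n
  induction n with
  | zero => intro i j; simp [braidWord, bwp]
  | succ d ih => intro i j; simp [braidWord, bwp, ih]

section WIdent

variable {W : Type*} [Group W]

lemma semiconj_pow (a b : W) (r : ℕ) : a * (b*a)^r = (a*b)^r * a := by
  induction r with
  | zero => simp
  | succ d ih =>
      rw [pow_succ, ← mul_assoc, ih, pow_succ]
      group

lemma inv_of_invol {a : W} (ha : a * a = 1) : a⁻¹ = a :=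
  inv_eq_of_mul_eq_one_right ha

lemma mul_inv_invol {a b : W} (ha : a * a = 1) (hb : b * b = 1) : (a*b)⁻¹ = b*a := by
  rw [mul_inv_rev, inv_of_invol ha, inv_of_invol hb]

/-- key reflection identity -/
lemma refl_ident {a b : W} (ha : a * a = 1) (hb : b * b = 1) {n r : ℕ}
    (h : (a*b)^n = 1) (hr : r < n) : (b*a)^r * b = (a*b)^(n-1-r) * a := by
  have h1 : (a*b)^(n-1-r) * (a*b)^(r+1) = 1 := by
    rw [← pow_add]
    have he : n - 1 - r + (r+1) = n := by omega
    rw [he, h]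
  have h2 : (a*b)^(n-1-r) = ((a*b)^(r+1))⁻¹ := eq_inv_of_mul_eq_one_left h1
  rw [h2, ← inv_pow, mul_inv_invol ha hb, pow_succ, mul_assoc, mul_assoc, ha, mul_one]

lemma bwp_even_odd (k : ℕ) : ∀ a b : W, bwp a b (2*k) = (a*b)^k ∧ bwp a b (2*k+1) = (a*b)^k * a := by
  induction k with
  | zero => intro a b; simp [bwp]
  | succ d ih =>
      have heven : ∀ a b : W, bwp a b (2*(d+1)) = (a*b)^(d+1) := by
        intro a b
        have he : 2*(d+1) = (2*d+1) + 1 := by omega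
        rw [he, bwp, (ih b a).2, pow_succ, ← mul_assoc, semiconj_pow a b d, mul_assoc]
      intro a b
      refine ⟨heven a b, ?_⟩
      rw [show 2*(d+1)+1 = (2*(d+1))+1 from rfl, bwp, heven b a, semiconj_pow]

lemma bwp_symm {a b : W} (ha : a * a = 1) (hb : b * b = 1) {n : ℕ} (h : (a*b)^n = 1) :
    bwp a b n = bwp b a n := by
  rcases Nat.even_or_odd n with ⟨k, hk⟩ | ⟨k, hk⟩
  · have hn : n = 2*k := by omega
    subst hn
    rw [(bwp_even_odd k a b).1, (bwp_even_odd k b a).1]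
    have h2 : (a*b)^k * (a*b)^k = 1 := by rw [← pow_add, ← two_mul, h]
    have h3 : (b*a)^k = ((a*b)^k)⁻¹ := by
      rw [← inv_pow, mul_inv_invol ha hb]
    rw [h3, eq_comm, inv_eq_iff_mul_eq_one, h2]
  · have hn : n = 2*k+1 := by omega
    subst hn
    rw [(bwp_even_odd k a b).2, (bwp_even_odd k b a).2]
    have hr : k < 2*k+1 := by omega
    rw [refl_ident ha hb h hr, show 2*k+1-1-k = k from by omega]

end WIdent


section Semi

variable {W : Type*} [Group W]

/-- conjugation action on finitely supported functions -/
def conjAddAut (w : W) : (W →₀ ℤ) ≃+ (W →₀ ℤ) := Finsupp.domCongr (MulAut.conj w).toEquiv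

lemma conjAddAut_apply (w : W) (u : W →₀ ℤ) (x : W) :
    conjAddAut w u x = u (w⁻¹ * x * w) := by
  simp [conjAddAut, Finsupp.domCongr_apply, Finsupp.equivMapDomain_apply]

lemma conjAddAut_single (w x : W) (t : ℤ) :
    conjAddAut w (Finsupp.single x t) = Finsupp.single (w * x * w⁻¹) t := by
  simp [conjAddAut, Finsupp.domCongr_apply, Finsupp.equivMapDomain_single]

/-- the conjugation action as a homomorphism to the multiplicative automorphisms -/
def cact : W →* MulAut (Multiplicative (W →₀ ℤ)) where
  toFun w := AddEquiv.toMultiplicative (conjAddAut w)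
  map_one' := by
    apply MulEquiv.ext
    intro x
    show Multiplicative.ofAdd (conjAddAut 1 x.toAdd) = x
    apply Multiplicative.toAdd.injective
    ext y
    simp [conjAddAut_apply]
  map_mul' := by
    intro w w'
    apply MulEquiv.ext
    intro x
    show Multiplicative.ofAdd (conjAddAut (w * w') x.toAdd) = _
    show _ = Multiplicative.ofAdd (conjAddAut w (conjAddAut w' (Multiplicative.ofAdd (x.toAdd)).toAdd))
    apply Multiplicative.toAdd.injective
    ext y
    simp only [conjAddAut_apply, toAdd_ofAdd]
    congr 1
    group

/-- the semidirect product target -/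
abbrev Tsd (W : Type*) [Group W] := SemidirectProduct (Multiplicative (W →₀ ℤ)) W cact

lemma cact_ofAdd (w : W) (u : W →₀ ℤ) :
    cact w (Multiplicative.ofAdd u) = Multiplicative.ofAdd (conjAddAut w u) := rfl

/-- the generator images -/
def Xe (w : W) : Tsd W := ⟨Multiplicative.ofAdd (Finsupp.single w 1), w⟩

lemma bwp_Xe (n : ℕ) : ∀ a b : W, a*a = 1 → b*b = 1 →
    bwp (Xe a) (Xe b) n =
      ⟨Multiplicative.ofAdd (∑ r ∈ Finset.range n, Finsupp.single ((a*b)^r * a) (1:ℤ)),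
        bwp a b n⟩ := by
  induction n with
  | zero =>
      intro a b _ _
      show (1 : Tsd W) = _
      ext
      · simp [bwp]
      · simp [bwp]
  | succ d ih =>
      intro a b ha hb
      show Xe a * bwp (Xe b) (Xe a) d = _
      rw [ih b a hb ha]
      ext : 1
      · show (Multiplicative.ofAdd (Finsupp.single a 1) *
            cact a (Multiplicative.ofAdd (∑ r ∈ Finset.range d,
              Finsupp.single ((b*a)^r * b) (1:ℤ)))) = _
        rw [cact_ofAdd, ← ofAdd_add]
        congr 1
        rw [map_sum]
        rw [Finset.sum_range_succ']
        have hterm : ∀ r : ℕ, conjAddAut a (Finsupp.single ((b*a)^r * b) (1:ℤ))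
            = Finsupp.single ((a*b)^(r+1) * a) (1:ℤ) := by
          intro r
          rw [conjAddAut_single]
          congr 1
          rw [inv_of_invol ha, ← mul_assoc, semiconj_pow a b r, pow_succ]
          group
        rw [Finset.sum_congr rfl (fun r _ => hterm r)]
        rw [pow_zero, one_mul]
        exact add_comm _ _
      · show a * bwp b a d = bwp a b (d+1)
        rfl

lemma bwp_Xe_symm {a b : W} (ha : a*a = 1) (hb : b*b = 1) {n : ℕ} (h : (a*b)^n = 1) :
    bwp (Xe a) (Xe b) n = bwp (Xe b) (Xe a) n := by
  have hba : (b*a)^n = 1 := by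
    have : (b*a)^n = ((a*b)^n)⁻¹ := by rw [← inv_pow, mul_inv_invol ha hb]
    rw [this, h, inv_one]
  rw [bwp_Xe n a b ha hb, bwp_Xe n b a hb ha]
  ext : 1
  · show Multiplicative.ofAdd _ = Multiplicative.ofAdd _
    congr 1
    rw [← Finset.sum_range_reflect (fun r => Finsupp.single ((a*b)^r * a) (1:ℤ)) n]
    apply Finset.sum_congr rfl
    intro r hr
    rw [Finset.mem_range] at hr
    rw [← refl_ident ha hb h hr]
  · exact bwp_symm ha hb h

lemma Xe_sq {w : W} (hw : w*w = 1) :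
    Xe w * Xe w = SemidirectProduct.inl (Multiplicative.ofAdd (Finsupp.single w (2:ℤ))) := by
  ext : 1
  · show Multiplicative.ofAdd (Finsupp.single w 1) * cact w (Multiplicative.ofAdd (Finsupp.single w 1)) = _
    rw [cact_ofAdd, conjAddAut_single, ← ofAdd_add]
    congr 1
    have : w * w * w⁻¹ = w := by rw [hw, inv_of_invol hw, one_mul]
    rw [this, ← Finsupp.single_add]
    norm_num
  · show w * w = 1
    exact hw

lemma Xe_zpow {w : W} (hw : w*w = 1) (t : ℤ) :
    Xe w ^ (2*t) = SemidirectProduct.inl (Multiplicative.ofAdd (Finsupp.single w (2*t))) := by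
  have h1 : Xe w ^ (2*t) = (Xe w ^ (2:ℤ))^t := by rw [← zpow_mul]
  rw [h1, show (Xe w ^ (2:ℤ)) = Xe w * Xe w by rw [zpow_two], Xe_sq hw, ← map_zpow]
  congr 1
  apply Multiplicative.toAdd.injective
  simp [toAdd_zpow, Finsupp.smul_single, mul_comm]

end Semi


section Helpers

variable {W : Type*} [Group W] {a b : W}

lemma ne_of_sq (ha : a*a = 1) (hb : b*b = 1) (hk : (a*b)^2 ≠ 1) : a ≠ b := by
  intro h
  apply hk
  rw [← h, sq, ← mul_assoc, ha, one_mul, ha]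

lemma aba_ne_a (ha : a*a = 1) (hb : b*b = 1) (hk : (a*b)^2 ≠ 1) : a*b*a ≠ a := by
  intro h
  have h1 : b * a = 1 := by
    apply mul_left_cancel (a := a)
    rw [← mul_assoc, h, mul_one]
  apply hk
  have h2 : a * b = 1 := by
    have : b = a⁻¹ := eq_inv_of_mul_eq_one_left h1
    rw [this, mul_inv_cancel]
  rw [h2, one_pow]

lemma aba_ne_b (ha : a*a = 1) (hb : b*b = 1) (hk : (a*b)^2 ≠ 1) : a*b*a ≠ b := by
  intro h
  apply hk
  rw [sq, show a*b*(a*b) = (a*b*a)*b by group, h, hb]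

lemma bab_ne_a (ha : a*a = 1) (hb : b*b = 1) (hk : (a*b)^2 ≠ 1) : b*a*b ≠ a := by
  intro h
  have hk' : (b*a)^2 ≠ 1 := by
    intro h2
    apply hk
    have : (a*b)^2 = ((b*a)^2)⁻¹ := by
      rw [← inv_pow, mul_inv_invol hb ha]
    rw [this, h2, inv_one]
  exact aba_ne_b hb ha hk' h

lemma bab_ne_b (ha : a*a = 1) (hb : b*b = 1) (hk : (a*b)^2 ≠ 1) : b*a*b ≠ b := by
  intro h
  have hk' : (b*a)^2 ≠ 1 := by
    intro h2
    apply hk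
    have : (a*b)^2 = ((b*a)^2)⁻¹ := by
      rw [← inv_pow, mul_inv_invol hb ha]
    rw [this, h2, inv_one]
  exact aba_ne_a hb ha hk' h

/-- extraction of coefficients from a centrality relation -/
lemma coeffs_zero (ha : a*a = 1) (hb : b*b = 1) (hk : (a*b)^2 ≠ 1) (st : ℤ × ℤ)
    (hA : conjAddAut a (Finsupp.single a st.1 + Finsupp.single b st.2)
        = Finsupp.single a st.1 + Finsupp.single b st.2)
    (hB : conjAddAut b (Finsupp.single a st.1 + Finsupp.single b st.2)
        = Finsupp.single a st.1 + Finsupp.single b st.2) :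
    st.1 = 0 ∧ st.2 = 0 := by
  classical
  obtain ⟨sₐ, t⟩ := st
  have hab := ne_of_sq ha hb hk
  constructor
  · -- evaluate hB at a
    have e := congrArg (fun f : W →₀ ℤ => f a) hB
    simp only [conjAddAut_apply, Finsupp.add_apply] at e
    rw [inv_of_invol hb] at e
    rw [Finsupp.single_apply, Finsupp.single_apply] at e
    rw [if_neg (bab_ne_a ha hb hk).symm, if_neg ((bab_ne_b ha hb hk).symm)] at e
    rw [Finsupp.single_apply, Finsupp.single_apply, if_pos rfl, if_neg hab.symm] at e
    simpa using e.symm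
  · -- evaluate hA at b
    have e := congrArg (fun f : W →₀ ℤ => f b) hA
    simp only [conjAddAut_apply, Finsupp.add_apply] at e
    rw [inv_of_invol ha] at e
    rw [Finsupp.single_apply, Finsupp.single_apply] at e
    rw [if_neg (aba_ne_a ha hb hk).symm, if_neg ((aba_ne_b ha hb hk).symm)] at e
    rw [Finsupp.single_apply, Finsupp.single_apply, if_neg hab, if_pos rfl] at e
    simpa using e.symm

end Helpers

/-- the virtually-cyclic master lemma -/
lemma vc_master {Q : Type*} [Group Q] (H : Subgroup Q) (hfi : H.FiniteIndex) (hc : IsCyclic H)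
    (x y : Q) : ∃ p q : ℤ, ¬(p = 0 ∧ q = 0) ∧ x ^ p = y ^ q := by
  haveI := hfi
  set N := H.normalCore with hN
  haveI : N.FiniteIndex := Subgroup.finiteIndex_normalCore H
  set n := N.index with hn
  have hn0 : n ≠ 0 := Subgroup.FiniteIndex.index_ne_zero
  have hxN : x ^ n ∈ N := N.pow_index_mem x
  have hyN : y ^ n ∈ N := N.pow_index_mem y
  obtain ⟨g, hg⟩ := hc.exists_generator
  obtain ⟨u, hu⟩ := Subgroup.mem_zpowers_iff.mp (hg ⟨x ^ n, H.normalCore_le hxN⟩)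
  obtain ⟨v, hv⟩ := Subgroup.mem_zpowers_iff.mp (hg ⟨y ^ n, H.normalCore_le hyN⟩)
  have hu' : ((g : Q))^u = x ^ n := by
    have := congrArg (Subtype.val) hu
    simpa [SubgroupClass.coe_zpow] using this
  have hv' : ((g : Q))^v = y ^ n := by
    have := congrArg (Subtype.val) hv
    simpa [SubgroupClass.coe_zpow] using this
  by_cases huv : u = 0 ∧ v = 0
  · refine ⟨(n : ℤ), 0, ?_, ?_⟩
    · intro hcon
      exact hn0 (by exact_mod_cast hcon.1)
    · rw [zpow_natCast, zpow_zero, ← hu', huv.1, zpow_zero]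
  · refine ⟨(n : ℤ) * v, (n : ℤ) * u, ?_, ?_⟩
    · intro hcon
      apply huv
      constructor
      · rcases mul_eq_zero.mp hcon.2 with h | h
        · exact absurd (by exact_mod_cast h) hn0
        · exact h
      · rcases mul_eq_zero.mp hcon.1 with h | h
        · exact absurd (by exact_mod_cast h) hn0
        · exact h
    · rw [zpow_mul, zpow_mul, zpow_natCast, zpow_natCast, ← hu', ← hv', ← zpow_mul, ← zpow_mul,
        mul_comm u v]

end CWArtin

end


open CWArtin in
/-- If `G` is an irreducible Artin–Tits group of spherical type, then `G/Z(G)` is not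
virtually cyclic. -/
theorem artin_mod_center_not_virtually_cyclic {B : Type*} (M : CoxeterMatrix B)
    (hirr : M.IsIrreducible) (hsph : M.IsSpherical) (hedge : M.HasEdge) :
    ¬ ∃ H : Subgroup (ArtinGroup M ⧸ Subgroup.center (ArtinGroup M)),
        H.FiniteIndex ∧ IsCyclic H := by
  have hedge' : ∃ i j : B, i ≠ j ∧ 3 ≤ M i j := hedge
  rintro ⟨H, hfi, hcyc⟩
  obtain ⟨i, j, hij, hm⟩ := hedge'
  set cs := M.toCoxeterSystem with hcs
  -- basic facts about the simple reflections
  have hsimple : cs.simple = M.simple := M.toCoxeterSystem_simple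
  have ha : M.simple i * M.simple i = 1 := by
    rw [← hsimple]; exact cs.simple_mul_simple_self i
  have hb : M.simple j * M.simple j = 1 := by
    rw [← hsimple]; exact cs.simple_mul_simple_self j
  have hpow : ∀ k l : B, (M.simple k * M.simple l) ^ (M k l) = 1 := by
    intro k l
    rw [← hsimple]; exact cs.simple_mul_simple_pow k l
  have hinv : ∀ k : B, M.simple k * M.simple k = 1 := by
    intro k
    rw [← hsimple]; exact cs.simple_mul_simple_self k
  have hk : (M.simple i * M.simple j)^2 ≠ 1 := CWGeom.simple_pair_sq_ne_one M i j hm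
  -- the homomorphism to the semidirect product
  have hrels : ∀ r ∈ artinRelationsSet M,
      FreeGroup.lift (fun k => Xe (M.simple k)) r = 1 := by
    rintro r ⟨i', j', hij', rfl⟩
    rw [map_mul, map_inv, lift_braidWord, lift_braidWord, mul_inv_eq_one]
    exact bwp_Xe_symm (hinv i') (hinv j') (hpow i' j')
  set ψ : ArtinGroup M →* Tsd (M.Group) := PresentedGroup.toGroup hrels with hψ
  have hψof : ∀ k : B, ψ (PresentedGroup.of k) = Xe (M.simple k) := fun k =>
    PresentedGroup.toGroup.of hrels
  -- apply the master lemma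
  set π : ArtinGroup M →* ArtinGroup M ⧸ Subgroup.center (ArtinGroup M) :=
    QuotientGroup.mk' _ with hπ
  obtain ⟨p, q, hpq, hxy⟩ := vc_master H hfi hcyc (π (PresentedGroup.of i)) (π (PresentedGroup.of j))
  -- the central element
  set g₀ : ArtinGroup M :=
    (PresentedGroup.of i) ^ (2*p) * ((PresentedGroup.of j) ^ (2*q))⁻¹ with hg₀
  have hg₀c : g₀ ∈ Subgroup.center (ArtinGroup M) := by
    rw [← QuotientGroup.eq_one_iff (N := Subgroup.center (ArtinGroup M))]
    show π g₀ = 1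
    rw [hg₀, map_mul, map_inv, map_zpow, map_zpow]
    rw [show (2*p : ℤ) = p*2 by ring, show (2*q : ℤ) = q*2 by ring, zpow_mul, zpow_mul, hxy,
      mul_inv_cancel]
  -- push to the semidirect product
  have hcommA : ψ g₀ * Xe (M.simple i) = Xe (M.simple i) * ψ g₀ := by
    rw [← hψof i, ← map_mul, ← map_mul]
    congr 1
    exact (Subgroup.mem_center_iff.mp hg₀c _).symm
  have hcommB : ψ g₀ * Xe (M.simple j) = Xe (M.simple j) * ψ g₀ := by
    rw [← hψof j, ← map_mul, ← map_mul]
    congr 1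
    exact (Subgroup.mem_center_iff.mp hg₀c _).symm
  -- compute ψ g₀
  have hval : ψ g₀ = SemidirectProduct.inl (Multiplicative.ofAdd
      (Finsupp.single (M.simple i) (2*p) + Finsupp.single (M.simple j) (-(2*q)))) := by
    rw [hg₀, map_mul, map_inv, map_zpow, map_zpow, hψof i, hψof j,
      Xe_zpow ha p, Xe_zpow hb q, ← map_inv, ← map_mul]
    congr 1
    rw [← ofAdd_neg, ← ofAdd_add]
    congr 1
    rw [← Finsupp.single_neg]
  -- extract the coefficients
  have hzero := coeffs_zero ha hb hk (2*p, -(2*q)) ?_ ?_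
  · apply hpq
    constructor
    · have := hzero.1; omega
    · have := hzero.2; omega
  · -- A-condition
    have h := hcommA
    rw [hval] at h
    have hleft := congrArg SemidirectProduct.left h
    simp only [SemidirectProduct.mul_left, SemidirectProduct.left_inl,
      SemidirectProduct.right_inl, map_one, MulAut.one_apply, Xe] at hleft
    rw [mul_comm] at hleft
    have h2 := mul_left_cancel hleft
    rw [cact_ofAdd] at h2
    exact (Multiplicative.ofAdd.injective h2.symm)
  · -- B-condition
    have h := hcommB
    rw [hval] at h
    have hleft := congrArg SemidirectProduct.left h
    simp only [SemidirectProduct.mul_left, SemidirectProduct.left_inl,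
      SemidirectProduct.right_inl, map_one, MulAut.one_apply, Xe] at hleft
    rw [mul_comm] at hleft
    have h2 := mul_left_cancel hleft
    rw [cact_ofAdd] at h2
    exact (Multiplicative.ofAdd.injective h2.symm)
end
end
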